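/- Let p be a prime and let G be a subgroup of a direct product H_1 × ⋯ × H_r of finite groups such that for each i, 1 ≤ i ≤ r, the projection map π_i : G → H_i is surjective. Then c_p(G) ≤ c_p(H_1) + ⋯ + c_p(H_r). -/

import Mathlib

/-- A composition series of a group `G`: an ascending chain of subgroups from `⊥` to `⊤`
in which each term is normal in the next, with simple quotients. -/
structure GroupCompSeries (G : Type*) [Group G] where
  len : ℕ
  ser : Fin (len + 1) → Subgroup G
  ser_bot : ser 0 = ⊥
  ser_top : ser (Fin.last len) = ⊤
  ser_le : ∀ i : Fin len, ser i.castSucc ≤ ser i.succ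
  ser_normal : ∀ i : Fin len, ((ser i.castSucc).subgroupOf (ser i.succ)).Normal
  ser_simple : ∀ i : Fin len,
    haveI := ser_normal i
    IsSimpleGroup (↥(ser i.succ) ⧸ (ser i.castSucc).subgroupOf (ser i.succ))

/-- The number of factors of order `p` in a composition series. -/
noncomputable def GroupCompSeries.count {G : Type*} [Group G]
    (S : GroupCompSeries G) (p : ℕ) : ℕ := by
  classical
  exact (Finset.univ.filter fun i : Fin S.len =>
    Nat.card (↥(S.ser i.succ) ⧸ (S.ser i.castSucc).subgroupOf (S.ser i.succ)) = p).card

/-- `cp p G` is the number of composition factors of `G` of order `p`, counted with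
multiplicity in a composition series (well defined by Jordan–Hölder). -/
noncomputable def cp (p : ℕ) (G : Type*) [Group G] : ℕ := by
  classical
  exact if h : Nonempty (GroupCompSeries G) then h.some.count p else 0

/-- The constant `ε_q` of Theorem 1, for `q = p ^ f`. -/
noncomputable def epsq (p f : ℕ) : ℚ := by
  classical
  exact if p = 2 ∧ Even f then 4 / 3
    else if ∃ n : ℕ, p = 2 ^ 2 ^ n + 1 then p / (p - 1)
    else 1

/-- A subgroup of `GL(d, F)` acts irreducibly on its natural module. -/
def natIrreducible {F : Type*} [Field F] {d : ℕ}
    (G : Subgroup (Matrix.GeneralLinearGroup (Fin d) F)) : Prop :=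
  (⊥ : Submodule F (Fin d → F)) ≠ ⊤ ∧
  ∀ W : Submodule F (Fin d → F),
    (∀ g ∈ G, ∀ v ∈ W, Matrix.mulVec (g : Matrix (Fin d) (Fin d) F) v ∈ W) →
      W = ⊥ ∨ W = ⊤


open Subgroup QuotientGroup

section Helpers
variable {G : Type*} [Group G] {H : Type*} [Group H]

/-- Transfer simplicity across a `MulEquiv`. -/
lemma isSimpleGroup_congr (e : G ≃* H) [IsSimpleGroup G] : IsSimpleGroup H := by
  haveI : Nontrivial H := e.symm.toEquiv.nontrivial
  constructor
  intro K hK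
  have h2 : (K.comap e.toMonoidHom).Normal := hK.comap _
  rcases IsSimpleGroup.eq_bot_or_eq_top_of_normal (K.comap e.toMonoidHom) h2 with h | h
  · left
    have := congrArg (Subgroup.map e.toMonoidHom) h
    rwa [Subgroup.map_comap_eq_self_of_surjective e.surjective, Subgroup.map_bot] at this
  · right
    have := congrArg (Subgroup.map e.toMonoidHom) h
    rwa [Subgroup.map_comap_eq_self_of_surjective e.surjective,
      ← MonoidHom.range_eq_map, MonoidHom.range_eq_top.2 e.surjective] at this

/-- Kernel-trick transport along an injective hom. -/
lemma map_inj_transport (f : H →* G) (hf : Function.Injective f) (A B : Subgroup H)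
    [hn : (A.subgroupOf B).Normal] :
    ∃ _ : ((A.map f).subgroupOf (B.map f)).Normal,
      Nonempty ((↥(B.map f) ⧸ (A.map f).subgroupOf (B.map f)) ≃* (↥B ⧸ A.subgroupOf B)) := by
  let e : ↥B ≃* ↥(B.map f) := Subgroup.equivMapOfInjective B f hf
  let φ : ↥(B.map f) →* ↥B ⧸ A.subgroupOf B :=
    (QuotientGroup.mk' (A.subgroupOf B)).comp e.symm.toMonoidHom
  have hs : Function.Surjective φ :=
    (QuotientGroup.mk'_surjective _).comp e.symm.surjective
  have hker : φ.ker = (A.map f).subgroupOf (B.map f) := by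
    ext x
    have hx : f ↑(e.symm x) = ↑x := by
      have : (↑(e (e.symm x)) : G) = ↑x := by rw [e.apply_symm_apply]
      rwa [Subgroup.coe_equivMapOfInjective_apply] at this
    simp only [φ, MonoidHom.mem_ker, MonoidHom.comp_apply, MulEquiv.coe_toMonoidHom,
      QuotientGroup.mk'_apply, QuotientGroup.eq_one_iff]
    simp only [Subgroup.mem_subgroupOf]
    constructor
    · intro h
      exact ⟨↑(e.symm x), h, hx⟩
    · rintro ⟨a, ha, hax⟩
      have : a = ↑(e.symm x) := hf (by rw [hax, hx])
      rwa [this] at ha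
  haveI hnormal : ((A.map f).subgroupOf (B.map f)).Normal := by
    rw [← hker]; exact φ.normal_ker
  exact ⟨hnormal, ⟨(QuotientGroup.quotientMulEquivOfEq hker).symm.trans
    (QuotientGroup.quotientKerEquivOfSurjective φ hs)⟩⟩

/-- Kernel-trick transport along a surjective hom (comap). -/
lemma comap_surj_transport (f : G →* H) (hf : Function.Surjective f) (A B : Subgroup H)
    [hn : (A.subgroupOf B).Normal] :
    ∃ _ : ((A.comap f).subgroupOf (B.comap f)).Normal,
      Nonempty ((↥(B.comap f) ⧸ (A.comap f).subgroupOf (B.comap f)) ≃* (↥B ⧸ A.subgroupOf B)) := by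
  let ψ : ↥(B.comap f) →* ↥B :=
    (f.comp (B.comap f).subtype).codRestrict B (fun x => x.2)
  let φ : ↥(B.comap f) →* ↥B ⧸ A.subgroupOf B := (QuotientGroup.mk' (A.subgroupOf B)).comp ψ
  have hψs : Function.Surjective ψ := by
    rintro ⟨b, hb⟩
    obtain ⟨g, rfl⟩ := hf b
    exact ⟨⟨g, hb⟩, rfl⟩
  have hs : Function.Surjective φ := (QuotientGroup.mk'_surjective _).comp hψs
  have hker : φ.ker = (A.comap f).subgroupOf (B.comap f) := by
    ext x
    simp only [φ, MonoidHom.mem_ker, MonoidHom.comp_apply, QuotientGroup.mk'_apply,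
      QuotientGroup.eq_one_iff]
    simp [ψ, Subgroup.mem_subgroupOf, Subgroup.mem_comap, MonoidHom.codRestrict]
  haveI hnormal : ((A.comap f).subgroupOf (B.comap f)).Normal := by
    rw [← hker]; exact φ.normal_ker
  exact ⟨hnormal, ⟨(QuotientGroup.quotientMulEquivOfEq hker).symm.trans
    (QuotientGroup.quotientKerEquivOfSurjective φ hs)⟩⟩

end Helpers

open Subgroup QuotientGroup Pointwise



variable {G : Type*} [Group G]

lemma secondIsoCore (x y : Subgroup G) (hn : (y.subgroupOf (x ⊔ y)).Normal) :
    ∃ _ : ((x ⊓ y).subgroupOf x).Normal,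
      Nonempty ((↥x ⧸ (x ⊓ y).subgroupOf x) ≃* (↥(x ⊔ y) ⧸ y.subgroupOf (x ⊔ y))) := by
  haveI := hn
  let incl : ↥x →* ↥(x ⊔ y) := Subgroup.inclusion le_sup_left
  let φ : ↥x →* ↥(x ⊔ y) ⧸ y.subgroupOf (x ⊔ y) :=
    (QuotientGroup.mk' (y.subgroupOf (x ⊔ y))).comp incl
  have hsup : x.subgroupOf (x ⊔ y) ⊔ y.subgroupOf (x ⊔ y) = ⊤ := by
    apply Subgroup.map_injective (Subgroup.subtype_injective (x ⊔ y))
    rw [Subgroup.map_sup, Subgroup.subgroupOf_map_subtype, Subgroup.subgroupOf_map_subtype,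
      ← MonoidHom.range_eq_map, Subgroup.range_subtype,
      inf_eq_left.2 le_sup_left, inf_eq_left.2 le_sup_right]
  have hker : φ.ker = (x ⊓ y).subgroupOf x := by
    ext u
    simp only [φ, MonoidHom.mem_ker, MonoidHom.comp_apply, QuotientGroup.mk'_apply,
      QuotientGroup.eq_one_iff, Subgroup.mem_subgroupOf, Subgroup.mem_inf]
    simp only [incl, Subgroup.coe_inclusion]
    exact ⟨fun h => ⟨u.2, h⟩, fun h => h.2⟩
  have hs : Function.Surjective φ := by
    intro q
    induction q using QuotientGroup.induction_on with
    | _ w =>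
      have hw : w ∈ x.subgroupOf (x ⊔ y) ⊔ y.subgroupOf (x ⊔ y) := hsup ▸ Subgroup.mem_top w
      have hw2 : w ∈ ((x.subgroupOf (x ⊔ y) : Set ↥(x ⊔ y)) *
          (y.subgroupOf (x ⊔ y) : Set ↥(x ⊔ y))) := by
        rw [← Subgroup.mul_normal]; exact hw
      obtain ⟨u, hu, v, hv, rfl⟩ := hw2
      refine ⟨⟨↑u, hu⟩, ?_⟩
      have hincl : incl ⟨↑u, hu⟩ = u := Subtype.ext rfl
      show QuotientGroup.mk (incl ⟨↑u, hu⟩) = QuotientGroup.mk (u * v)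
      rw [hincl, QuotientGroup.eq]
      simpa using hv
  haveI hnormal : ((x ⊓ y).subgroupOf x).Normal := by rw [← hker]; exact φ.normal_ker
  exact ⟨hnormal, ⟨(QuotientGroup.quotientMulEquivOfEq hker).symm.trans
    (QuotientGroup.quotientKerEquivOfSurjective φ hs)⟩⟩

lemma secondIsoCore' (x y : Subgroup G) (hn : (x.subgroupOf (x ⊔ y)).Normal) :
    ∃ _ : ((x ⊓ y).subgroupOf y).Normal,
      Nonempty ((↥y ⧸ (x ⊓ y).subgroupOf y) ≃* (↥(x ⊔ y) ⧸ x.subgroupOf (x ⊔ y))) := by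
  haveI := hn
  let incl : ↥y →* ↥(x ⊔ y) := Subgroup.inclusion le_sup_right
  let φ : ↥y →* ↥(x ⊔ y) ⧸ x.subgroupOf (x ⊔ y) :=
    (QuotientGroup.mk' (x.subgroupOf (x ⊔ y))).comp incl
  have hsup : x.subgroupOf (x ⊔ y) ⊔ y.subgroupOf (x ⊔ y) = ⊤ := by
    apply Subgroup.map_injective (Subgroup.subtype_injective (x ⊔ y))
    rw [Subgroup.map_sup, Subgroup.subgroupOf_map_subtype, Subgroup.subgroupOf_map_subtype,
      ← MonoidHom.range_eq_map, Subgroup.range_subtype,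
      inf_eq_left.2 le_sup_left, inf_eq_left.2 le_sup_right]
  have hker : φ.ker = (x ⊓ y).subgroupOf y := by
    ext u
    simp only [φ, MonoidHom.mem_ker, MonoidHom.comp_apply, QuotientGroup.mk'_apply,
      QuotientGroup.eq_one_iff, Subgroup.mem_subgroupOf, Subgroup.mem_inf]
    simp only [incl, Subgroup.coe_inclusion]
    exact ⟨fun h => ⟨h, u.2⟩, fun h => h.1⟩
  have hs : Function.Surjective φ := by
    intro q
    induction q using QuotientGroup.induction_on with
    | _ w =>
      have hw : w ∈ x.subgroupOf (x ⊔ y) ⊔ y.subgroupOf (x ⊔ y) := hsup ▸ Subgroup.mem_top w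
      have hw2 : w ∈ ((x.subgroupOf (x ⊔ y) : Set ↥(x ⊔ y)) *
          (y.subgroupOf (x ⊔ y) : Set ↥(x ⊔ y))) := by
        rw [← Subgroup.normal_mul]; exact hw
      obtain ⟨u, hu, v, hv, rfl⟩ := hw2
      refine ⟨⟨↑v, hv⟩, ?_⟩
      have hincl : incl ⟨↑v, hv⟩ = v := Subtype.ext rfl
      show QuotientGroup.mk (incl ⟨↑v, hv⟩) = QuotientGroup.mk (u * v)
      rw [hincl, QuotientGroup.eq]
      have : v⁻¹ * (u * v) = v⁻¹ * u * v := by group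
      rw [this]
      simpa using hn.conj_mem' u hu v
  haveI hnormal : ((x ⊓ y).subgroupOf y).Normal := by rw [← hker]; exact φ.normal_ker
  exact ⟨hnormal, ⟨(QuotientGroup.quotientMulEquivOfEq hker).symm.trans
    (QuotientGroup.quotientKerEquivOfSurjective φ hs)⟩⟩

lemma abstract_sup {Z : Type*} [Group Z] (A B : Subgroup Z) [hA' : A.Normal] [hB' : B.Normal]
    (hA : IsSimpleGroup (Z ⧸ A)) (hB : IsSimpleGroup (Z ⧸ B)) (hne : A ≠ B) : A ⊔ B = ⊤ := by
  have hmapB : (Subgroup.map (QuotientGroup.mk' A) B).Normal :=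
    hB'.map _ (QuotientGroup.mk'_surjective A)
  rcases hA.eq_bot_or_eq_top_of_normal _ hmapB with h | h
  · have hBA : B ≤ A := by rwa [Subgroup.map_eq_bot_iff, QuotientGroup.ker_mk'] at h
    have hmapA : (Subgroup.map (QuotientGroup.mk' B) A).Normal :=
      hA'.map _ (QuotientGroup.mk'_surjective B)
    rcases hB.eq_bot_or_eq_top_of_normal _ hmapA with h' | h'
    · have hAB : A ≤ B := by rwa [Subgroup.map_eq_bot_iff, QuotientGroup.ker_mk'] at h'
      exact absurd (le_antisymm hAB hBA) hne
    · have := congrArg (Subgroup.comap (QuotientGroup.mk' B)) h'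
      rwa [Subgroup.comap_map_eq, QuotientGroup.ker_mk', Subgroup.comap_top] at this
  · have := congrArg (Subgroup.comap (QuotientGroup.mk' A)) h
    rw [Subgroup.comap_map_eq, QuotientGroup.ker_mk', Subgroup.comap_top] at this
    rwa [sup_comm]

lemma subgroupOf_inj_of_le {A B K : Subgroup G} (hA : A ≤ K) (hB : B ≤ K)
    (h : A.subgroupOf K = B.subgroupOf K) : A = B := by
  have := congrArg (Subgroup.map K.subtype) h
  rwa [Subgroup.subgroupOf_map_subtype, Subgroup.subgroupOf_map_subtype,
    inf_eq_left.2 hA, inf_eq_left.2 hB] at this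

instance : JordanHolderLattice (Subgroup G) where
  IsMaximal A B := A ≤ B ∧ ∃ _ : (A.subgroupOf B).Normal, IsSimpleGroup (↥B ⧸ A.subgroupOf B)
  lt_of_isMaximal {x y} h := by
    obtain ⟨hle, hn, hs⟩ := h
    rcases eq_or_lt_of_le hle with rfl | hlt
    · exfalso
      have h2 : Subsingleton (↥x ⧸ x.subgroupOf x) := by
        rw [Subgroup.subgroupOf_self]; exact QuotientGroup.subsingleton_quotient_top
      exact not_subsingleton_iff_nontrivial.2 hs.toNontrivial h2
    · exact hlt
  sup_eq_of_isMaximal {x y z} hx hy hne := by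
    obtain ⟨hxz, hnx, hsx⟩ := hx
    obtain ⟨hyz, hny, hsy⟩ := hy
    haveI := hnx; haveI := hny
    have key : x.subgroupOf z ⊔ y.subgroupOf z = ⊤ :=
      abstract_sup _ _ hsx hsy (fun h => hne (subgroupOf_inj_of_le hxz hyz h))
    have := congrArg (Subgroup.map z.subtype) key
    rwa [Subgroup.map_sup, Subgroup.subgroupOf_map_subtype, Subgroup.subgroupOf_map_subtype,
      ← MonoidHom.range_eq_map, Subgroup.range_subtype,
      inf_eq_left.2 hxz, inf_eq_left.2 hyz] at this
  isMaximal_inf_left_of_isMaximal_sup {x y} hx hy := by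
    obtain ⟨hy1, hny, hsy⟩ := hy
    obtain ⟨hn, ⟨e⟩⟩ := secondIsoCore x y hny
    refine ⟨inf_le_left, hn, ?_⟩
    haveI := hny; haveI := hsy
    exact isSimpleGroup_congr e.symm

section P3
variable {G : Type*} [Group G]

/-- View a `GroupCompSeries` as a `CompositionSeries` in the Jordan–Hölder lattice. -/
def GroupCompSeries.toCS (S : GroupCompSeries G) : CompositionSeries (Subgroup G) where
  length := S.len
  toFun := S.ser
  step i := ⟨S.ser_le i, S.ser_normal i, S.ser_simple i⟩

lemma GroupCompSeries.count_eq_sum (S : GroupCompSeries G) (p : ℕ) :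
    S.count p = ∑ i : Fin S.len,
      if Nat.card (↥(S.ser i.succ) ⧸ (S.ser i.castSucc).subgroupOf (S.ser i.succ)) = p
      then 1 else 0 := by
  classical
  rw [GroupCompSeries.count, Finset.card_filter]

lemma GroupCompSeries.count_unique (S T : GroupCompSeries G) (p : ℕ) :
    S.count p = T.count p := by
  classical
  have hhead : S.toCS.head = T.toCS.head := by
    show S.ser 0 = T.ser 0
    rw [S.ser_bot, T.ser_bot]
  have hlast : S.toCS.last = T.toCS.last := by
    show S.ser (Fin.last _) = T.ser (Fin.last _)
    rw [S.ser_top, T.ser_top]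
  obtain ⟨e, he⟩ := CompositionSeries.jordan_holder S.toCS T.toCS hhead hlast
  rw [S.count_eq_sum, T.count_eq_sum]
  refine Fintype.sum_equiv e _ _ (fun i => ?_)
  obtain ⟨q⟩ := JordanHolderLattice.Iso.rel
    (fun X Y : Subgroup G × Subgroup G =>
      Nonempty ((↥X.2 ⧸ X.1.subgroupOf X.2) ≃ (↥Y.2 ⧸ Y.1.subgroupOf Y.2)))
    (fun {_} => ⟨Equiv.refl _⟩) (fun h => ⟨h.some.symm⟩) (fun h₁ h₂ => ⟨h₁.some.trans h₂.some⟩)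
    (fun {x y} h => by
      obtain ⟨hle, hn, hs⟩ := h
      obtain ⟨_, ⟨e'⟩⟩ := secondIsoCore' x y hn
      exact ⟨e'.toEquiv.symm⟩) (he i)
  have hc : Nat.card (↥(S.ser i.succ) ⧸ (S.ser i.castSucc).subgroupOf (S.ser i.succ)) =
      Nat.card (↥(T.ser (e i).succ) ⧸ (T.ser (e i).castSucc).subgroupOf (T.ser (e i).succ)) :=
    Nat.card_congr q
  exact if_congr ⟨fun h => hc.symm.trans h, fun h => hc.trans h⟩ rfl rfl

lemma cp_eq_count (p : ℕ) (S : GroupCompSeries G) : cp p G = S.count p := by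
  rw [cp, dif_pos ⟨S⟩]
  exact GroupCompSeries.count_unique _ _ p

lemma cp_of_subsingleton (p : ℕ) (X : Type*) [Group X] [Subsingleton X] : cp p X = 0 := by
  have key : ∀ S : GroupCompSeries X, S.count p = 0 := by
    intro S
    have he : IsEmpty (Fin S.len) := by
      constructor
      intro i
      have hs := S.ser_simple i
      have h2 : Subsingleton (↥(S.ser i.succ) ⧸ (S.ser i.castSucc).subgroupOf (S.ser i.succ)) :=
        Quotient.instSubsingletonQuotient _
      exact not_subsingleton_iff_nontrivial.2 hs.toNontrivial h2
    rw [GroupCompSeries.count_eq_sum, Finset.univ_eq_empty, Finset.sum_empty]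
  rw [cp]
  split_ifs with h
  · exact key _
  · rfl
end P3

section P4
variable {G : Type*} [Group G] {H : Type*} [Group H]

/-- The property of one step of a composition series. -/
def StepProp (A B : Subgroup G) : Prop :=
  A ≤ B ∧ ∃ _ : (A.subgroupOf B).Normal, IsSimpleGroup (↥B ⧸ A.subgroupOf B)

lemma StepProp.congr_step {A B A' B' : Subgroup G} (hA : A = A') (hB : B = B')
    (h : StepProp A B) : StepProp A' B' := by subst hA; subst hB; exact h

lemma GroupCompSeries.step (S : GroupCompSeries G) (i : Fin S.len) :
    StepProp (S.ser i.castSucc) (S.ser i.succ) :=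
  ⟨S.ser_le i, S.ser_normal i, S.ser_simple i⟩

/-- Smart constructor for `GroupCompSeries`. -/
def mkSeries (n : ℕ) (f : Fin (n + 1) → Subgroup G) (h0 : f 0 = ⊥) (h1 : f (Fin.last n) = ⊤)
    (hstep : ∀ i : Fin n, StepProp (f i.castSucc) (f i.succ)) : GroupCompSeries G where
  len := n
  ser := f
  ser_bot := h0
  ser_top := h1
  ser_le i := (hstep i).1
  ser_normal i := (hstep i).2.choose
  ser_simple i := (hstep i).2.choose_spec

lemma StepProp.map (f : H →* G) (hf : Function.Injective f) {A B : Subgroup H}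
    (h : StepProp A B) : StepProp (A.map f) (B.map f) := by
  obtain ⟨hle, hn, hs⟩ := h
  haveI := hn; haveI := hs
  obtain ⟨hn', ⟨e⟩⟩ := map_inj_transport f hf A B
  exact ⟨Subgroup.map_mono hle, hn', isSimpleGroup_congr e.symm⟩

lemma StepProp.comap (f : G →* H) (hf : Function.Surjective f) {A B : Subgroup H}
    (h : StepProp A B) : StepProp (A.comap f) (B.comap f) := by
  obtain ⟨hle, hn, hs⟩ := h
  haveI := hn; haveI := hs
  obtain ⟨hn', ⟨e⟩⟩ := comap_surj_transport f hf A B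
  exact ⟨Subgroup.comap_mono hle, hn', isSimpleGroup_congr e.symm⟩

lemma fac_card_congr {A B A' B' : Subgroup G} (hA : A = A') (hB : B = B') :
    Nat.card (↥B ⧸ A.subgroupOf B) = Nat.card (↥B' ⧸ A'.subgroupOf B') := by
  subst hA; subst hB; rfl

lemma fac_card_map (f : H →* G) (hf : Function.Injective f) (A B : Subgroup H)
    [hn : (A.subgroupOf B).Normal] :
    Nat.card (↥(B.map f) ⧸ (A.map f).subgroupOf (B.map f)) = Nat.card (↥B ⧸ A.subgroupOf B) := by
  haveI := (map_inj_transport f hf A B).choose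
  exact Nat.card_congr (map_inj_transport f hf A B).choose_spec.some.toEquiv

lemma fac_card_comap (f : G →* H) (hf : Function.Surjective f) (A B : Subgroup H)
    [hn : (A.subgroupOf B).Normal] :
    Nat.card (↥(B.comap f) ⧸ (A.comap f).subgroupOf (B.comap f)) =
      Nat.card (↥B ⧸ A.subgroupOf B) := by
  haveI := (comap_surj_transport f hf A B).choose
  exact Nat.card_congr (comap_surj_transport f hf A B).choose_spec.some.toEquiv

variable (N : Subgroup G) [hN : N.Normal]

/-- The underlying function of the glued series. -/
def glueFun (S : GroupCompSeries ↥N) (T : GroupCompSeries (G ⧸ N))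
    (i : Fin (S.len + T.len + 1)) : Subgroup G :=
  if h : (i : ℕ) ≤ S.len then Subgroup.map N.subtype (S.ser ⟨i, by omega⟩)
  else Subgroup.comap (QuotientGroup.mk' N) (T.ser ⟨(i : ℕ) - S.len, by
    have := i.isLt; omega⟩)

lemma glueFun_low (S : GroupCompSeries ↥N) (T : GroupCompSeries (G ⧸ N))
    (k : ℕ) (hk : k ≤ S.len) (hk' : k < S.len + T.len + 1) :
    glueFun N S T ⟨k, hk'⟩ = Subgroup.map N.subtype (S.ser ⟨k, by omega⟩) :=
  dif_pos hk

lemma glueFun_high (S : GroupCompSeries ↥N) (T : GroupCompSeries (G ⧸ N))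
    (k : ℕ) (hk : S.len ≤ k) (hk' : k < S.len + T.len + 1) :
    glueFun N S T ⟨k, hk'⟩ = Subgroup.comap (QuotientGroup.mk' N)
      (T.ser ⟨k - S.len, by omega⟩) := by
  rcases eq_or_lt_of_le hk with rfl | hlt
  · rw [glueFun]
    rw [dif_pos le_rfl]
    have h1 : S.ser ⟨S.len, by omega⟩ = ⊤ := S.ser_top
    have h2 : T.ser ⟨S.len - S.len, by omega⟩ = ⊥ := by
      have : (⟨S.len - S.len, by omega⟩ : Fin (T.len + 1)) = 0 := Fin.ext (by simp)
      rw [this, T.ser_bot]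
    rw [h1, h2, ← MonoidHom.range_eq_map, Subgroup.range_subtype]
    exact (QuotientGroup.ker_mk' N).symm
  · rw [glueFun, dif_neg (by simp only [Fin.val_mk]; omega)]


end P4

open Subgroup QuotientGroup Pointwise
section P4B
variable {G : Type*} [Group G] (N : Subgroup G) [hN : N.Normal]

/-- Glue a composition series of `N` and one of `G ⧸ N` to one of `G`. -/
def glueSeries (S : GroupCompSeries ↥N) (T : GroupCompSeries (G ⧸ N)) : GroupCompSeries G := by
  refine mkSeries (S.len + T.len) (glueFun N S T) ?_ ?_ ?_
  · have h0 : glueFun N S T 0 = Subgroup.map N.subtype (S.ser ⟨0, by omega⟩) := by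
      rw [show (0 : Fin (S.len + T.len + 1)) = ⟨0, by omega⟩ from Fin.ext rfl]
      exact glueFun_low N S T 0 (by omega) (by omega)
    rw [h0, show (⟨0, by omega⟩ : Fin (S.len + 1)) = 0 from Fin.ext rfl, S.ser_bot,
      Subgroup.map_bot]
  · have h0 : glueFun N S T (Fin.last (S.len + T.len)) =
        Subgroup.comap (QuotientGroup.mk' N) (T.ser ⟨S.len + T.len - S.len, by omega⟩) :=
      glueFun_high N S T (S.len + T.len) (by omega) (by omega)
    rw [h0, show (⟨S.len + T.len - S.len, by omega⟩ : Fin (T.len + 1)) = Fin.last T.len from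
      Fin.ext (by simp), T.ser_top, Subgroup.comap_top]
  · intro i
    rcases lt_or_ge (i : ℕ) S.len with hlow | hhigh
    · have hc1 : glueFun N S T i.castSucc =
          Subgroup.map N.subtype (S.ser (Fin.castSucc ⟨(i : ℕ), hlow⟩)) := by
        rw [show i.castSucc = (⟨(i : ℕ), by omega⟩ : Fin (S.len + T.len + 1)) from Fin.ext rfl]
        rw [glueFun_low N S T (i : ℕ) (by omega) (by omega)]
        exact congrArg _ (congrArg _ (Fin.ext rfl))
      have hc2 : glueFun N S T i.succ =
          Subgroup.map N.subtype (S.ser (Fin.succ ⟨(i : ℕ), hlow⟩)) := by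
        rw [show i.succ = (⟨(i : ℕ) + 1, by omega⟩ : Fin (S.len + T.len + 1)) from Fin.ext rfl]
        rw [glueFun_low N S T ((i : ℕ) + 1) (by omega) (by omega)]
        exact congrArg _ (congrArg _ (Fin.ext rfl))
      rw [hc1, hc2]
      exact (S.step ⟨(i : ℕ), hlow⟩).map N.subtype (Subgroup.subtype_injective N)
    · have hi := i.isLt
      have hc1 : glueFun N S T i.castSucc = Subgroup.comap (QuotientGroup.mk' N)
          (T.ser (Fin.castSucc ⟨(i : ℕ) - S.len, by omega⟩)) := by
        rw [show i.castSucc = (⟨(i : ℕ), by omega⟩ : Fin (S.len + T.len + 1)) from Fin.ext rfl]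
        rw [glueFun_high N S T (i : ℕ) (by omega) (by omega)]
        exact congrArg _ (congrArg _ (Fin.ext rfl))
      have hc2 : glueFun N S T i.succ = Subgroup.comap (QuotientGroup.mk' N)
          (T.ser (Fin.succ ⟨(i : ℕ) - S.len, by omega⟩)) := by
        rw [show i.succ = (⟨(i : ℕ) + 1, by omega⟩ : Fin (S.len + T.len + 1)) from Fin.ext rfl]
        rw [glueFun_high N S T ((i : ℕ) + 1) (by omega) (by omega)]
        exact congrArg _ (congrArg _ (Fin.ext (by simp; omega)))
      rw [hc1, hc2]
      exact (T.step ⟨(i : ℕ) - S.len, by omega⟩).comap (QuotientGroup.mk' N)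
        (QuotientGroup.mk'_surjective N)

lemma glueSeries_count (S : GroupCompSeries ↥N) (T : GroupCompSeries (G ⧸ N)) (p : ℕ) :
    (glueSeries N S T).count p = S.count p + T.count p := by
  rw [GroupCompSeries.count_eq_sum, GroupCompSeries.count_eq_sum, GroupCompSeries.count_eq_sum]
  rw [show (∑ i : Fin (glueSeries N S T).len,
      if Nat.card (↥((glueSeries N S T).ser i.succ) ⧸
        ((glueSeries N S T).ser i.castSucc).subgroupOf ((glueSeries N S T).ser i.succ)) = p
      then 1 else 0) = ∑ i : Fin (S.len + T.len),
      if Nat.card (↥(glueFun N S T i.succ) ⧸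
        (glueFun N S T i.castSucc).subgroupOf (glueFun N S T i.succ)) = p
      then 1 else 0 from rfl]
  rw [Fin.sum_univ_add]
  congr 1
  · refine Finset.sum_congr rfl (fun i _ => ?_)
    have hc1 : glueFun N S T (Fin.castAdd T.len i).castSucc =
        Subgroup.map N.subtype (S.ser i.castSucc) := by
      rw [show (Fin.castAdd T.len i).castSucc =
        (⟨(i : ℕ), by omega⟩ : Fin (S.len + T.len + 1)) from Fin.ext rfl]
      rw [glueFun_low N S T (i : ℕ) (by omega) (by omega)]
      exact congrArg _ (congrArg _ (Fin.ext rfl))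
    have hc2 : glueFun N S T (Fin.castAdd T.len i).succ =
        Subgroup.map N.subtype (S.ser i.succ) := by
      rw [show (Fin.castAdd T.len i).succ =
        (⟨(i : ℕ) + 1, by omega⟩ : Fin (S.len + T.len + 1)) from Fin.ext rfl]
      rw [glueFun_low N S T ((i : ℕ) + 1) (by omega) (by omega)]
      exact congrArg _ (congrArg _ (Fin.ext rfl))
    rw [hc1, hc2]
    haveI := S.ser_normal i
    rw [fac_card_map N.subtype (Subgroup.subtype_injective N) (S.ser i.castSucc) (S.ser i.succ)]
  · refine Finset.sum_congr rfl (fun i _ => ?_)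
    have hc1 : glueFun N S T (Fin.natAdd S.len i).castSucc =
        Subgroup.comap (QuotientGroup.mk' N) (T.ser i.castSucc) := by
      rw [show (Fin.natAdd S.len i).castSucc =
        (⟨S.len + (i : ℕ), by omega⟩ : Fin (S.len + T.len + 1)) from Fin.ext rfl]
      rw [glueFun_high N S T (S.len + (i : ℕ)) (by omega) (by omega)]
      exact congrArg _ (congrArg _ (Fin.ext (by simp)))
    have hc2 : glueFun N S T (Fin.natAdd S.len i).succ =
        Subgroup.comap (QuotientGroup.mk' N) (T.ser i.succ) := by
      rw [show (Fin.natAdd S.len i).succ =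
        (⟨S.len + (i : ℕ) + 1, by omega⟩ : Fin (S.len + T.len + 1)) from Fin.ext rfl]
      rw [glueFun_high N S T (S.len + (i : ℕ) + 1) (by omega) (by omega)]
      exact congrArg _ (congrArg _ (Fin.ext (by simp; omega)))
    rw [hc1, hc2]
    haveI := T.ser_normal i
    rw [fac_card_comap (QuotientGroup.mk' N) (QuotientGroup.mk'_surjective N)
      (T.ser i.castSucc) (T.ser i.succ)]
end P4B

open Subgroup QuotientGroup Pointwise
section P5
universe u
variable {G : Type*} [Group G]

lemma stepProp_bot_top (Q : Type*) [Group Q] [IsSimpleGroup Q] :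
    StepProp (⊥ : Subgroup Q) ⊤ := by
  refine ⟨bot_le, ?_⟩
  rw [Subgroup.bot_subgroupOf]
  refine ⟨inferInstance, ?_⟩
  exact isSimpleGroup_congr ((QuotientGroup.quotientBot.trans Subgroup.topEquiv).symm)

/-- The length-one composition series of a simple group. -/
def singleSeries (Q : Type*) [Group Q] [IsSimpleGroup Q] : GroupCompSeries Q := by
  refine mkSeries 1 (fun i => if i = 0 then ⊥ else ⊤) (if_pos rfl) (if_neg (by decide)) ?_
  intro i
  have h0 : i = 0 := Subsingleton.elim i 0
  subst h0
  have h1 : (Fin.castSucc (0 : Fin 1) = (0 : Fin 2)) := rfl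
  have h2 : (Fin.succ (0 : Fin 1) = (1 : Fin 2)) := rfl
  rw [h1, h2]
  show StepProp (if (0 : Fin 2) = 0 then (⊥ : Subgroup Q) else ⊤)
    (if (1 : Fin 2) = 0 then (⊥ : Subgroup Q) else ⊤)
  rw [if_pos rfl, if_neg (by decide)]
  exact stepProp_bot_top Q

lemma exists_maximal_normal (G : Type*) [Group G] [Finite G] [Nontrivial G] :
    ∃ N : Subgroup G, N.Normal ∧ N ≠ ⊤ ∧
      ∃ _ : N.Normal, IsSimpleGroup (G ⧸ N) := by
  haveI : Finite (Subgroup G) :=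
    Finite.of_injective (fun H => (H : Set G)) SetLike.coe_injective
  set s : Set (Subgroup G) := {K | K.Normal ∧ K ≠ ⊤} with hs
  have hbot : (⊥ : Subgroup G) ∈ s := ⟨inferInstance, bot_ne_top⟩
  obtain ⟨N, hNs, hmax⟩ := Set.Finite.exists_maximalFor id s (Set.toFinite s) ⟨⊥, hbot⟩
  obtain ⟨hNn, hNt⟩ := hNs
  haveI := hNn
  have hnontriv : Nontrivial (G ⧸ N) := by
    obtain ⟨x, hx⟩ : ∃ x, x ∉ N := by
      by_contra h
      push_neg at h
      exact hNt ((Subgroup.eq_top_iff' N).2 h)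
    exact nontrivial_of_ne (QuotientGroup.mk x) 1 (fun h => hx ((QuotientGroup.eq_one_iff x).1 h))
  refine ⟨N, hNn, hNt, hNn, ?_⟩
  constructor
  intro K hK
  set C := Subgroup.comap (QuotientGroup.mk' N) K with hC
  have hCn : C.Normal := hK.comap _
  have hNC : N ≤ C := by
    intro g hg
    show (QuotientGroup.mk' N) g ∈ K
    have : (QuotientGroup.mk' N) g = 1 := (QuotientGroup.eq_one_iff g).2 hg
    rw [this]; exact K.one_mem
  by_cases hCt : C = ⊤
  · right
    have := congrArg (Subgroup.map (QuotientGroup.mk' N)) hCt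
    rwa [Subgroup.map_comap_eq_self_of_surjective (QuotientGroup.mk'_surjective N),
      ← MonoidHom.range_eq_map, MonoidHom.range_eq_top.2 (QuotientGroup.mk'_surjective N)]
      at this
  · left
    have hNCeq : N = C := le_antisymm hNC (hmax ⟨hCn, hCt⟩ hNC)
    have : K = Subgroup.map (QuotientGroup.mk' N) C :=
      (Subgroup.map_comap_eq_self_of_surjective (QuotientGroup.mk'_surjective N) K).symm
    rw [this, ← hNCeq, Subgroup.map_eq_bot_iff, QuotientGroup.ker_mk']

lemma exists_compSeries_aux :
    ∀ (n : ℕ) (G : Type u) [Group G] [Finite G], Nat.card G ≤ n →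
      Nonempty (GroupCompSeries G) := by
  intro n
  induction n with
  | zero =>
    intro G _ _ h
    have := Nat.card_pos (α := G)
    omega
  | succ n ih =>
    intro G _ _ hcard
    by_cases hsub : Subsingleton G
    · refine ⟨mkSeries 0 (fun _ => ⊥) rfl ?_ (fun i => i.elim0)⟩
      ext x
      simp only [Subgroup.mem_bot, Subgroup.mem_top, iff_true]
      exact Subsingleton.elim x 1
    · haveI : Nontrivial G := not_subsingleton_iff_nontrivial.1 hsub
      obtain ⟨N, hNn, hNt, _, hNs⟩ := exists_maximal_normal G
      haveI := hNn; haveI := hNs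
      have hlt : Nat.card ↥N < Nat.card G := by
        have h1 : Nat.card ↥N = (N : Set G).ncard := (Nat.card_coe_set_eq _).symm
        have h2 : Nat.card G = (Set.univ : Set G).ncard := (Set.ncard_univ _).symm
        rw [h1, h2]
        refine Set.ncard_lt_ncard ?_ (Set.toFinite _)
        rw [Set.ssubset_univ_iff]
        exact fun h => hNt (Subgroup.coe_eq_univ.1 h)
      obtain ⟨S⟩ := ih ↥N (by omega)
      exact ⟨glueSeries N S (singleSeries (G ⧸ N))⟩

lemma exists_compSeries (G : Type u) [Group G] [Finite G] : Nonempty (GroupCompSeries G) :=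
  exists_compSeries_aux (Nat.card G) G le_rfl

lemma cp_eq_add (p : ℕ) [Finite G] (N : Subgroup G) [hN : N.Normal] :
    cp p G = cp p ↥N + cp p (G ⧸ N) := by
  obtain ⟨S⟩ := exists_compSeries ↥N
  obtain ⟨T⟩ := exists_compSeries (G ⧸ N)
  rw [cp_eq_count p (glueSeries N S T), glueSeries_count, ← cp_eq_count p S, ← cp_eq_count p T]

/-- Transport a composition series along a `MulEquiv`. -/
def mapSeriesEquiv {A B : Type*} [Group A] [Group B] (e : A ≃* B) (S : GroupCompSeries A) :
    GroupCompSeries B := by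
  refine mkSeries S.len (fun i => Subgroup.map e.toMonoidHom (S.ser i)) ?_ ?_ ?_
  · show Subgroup.map e.toMonoidHom (S.ser 0) = ⊥
    rw [S.ser_bot, Subgroup.map_bot]
  · show Subgroup.map e.toMonoidHom (S.ser (Fin.last S.len)) = ⊤
    rw [S.ser_top, ← MonoidHom.range_eq_map, MonoidHom.range_eq_top.2 e.surjective]
  · exact fun i => (S.step i).map e.toMonoidHom e.injective

lemma mapSeriesEquiv_count {A B : Type*} [Group A] [Group B] (e : A ≃* B)
    (S : GroupCompSeries A) (p : ℕ) : (mapSeriesEquiv e S).count p = S.count p := by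
  rw [GroupCompSeries.count_eq_sum, GroupCompSeries.count_eq_sum]
  refine Finset.sum_congr rfl (fun i _ => ?_)
  haveI := S.ser_normal i
  rw [show (mapSeriesEquiv e S).ser i.castSucc = Subgroup.map e.toMonoidHom (S.ser i.castSucc)
    from rfl]
  rw [show (mapSeriesEquiv e S).ser i.succ = Subgroup.map e.toMonoidHom (S.ser i.succ) from rfl]
  rw [fac_card_map e.toMonoidHom e.injective (S.ser i.castSucc) (S.ser i.succ) (hn := S.ser_normal i)]
  rfl

lemma cp_congr {A B : Type*} [Group A] [Group B] [Finite A] (e : A ≃* B) (p : ℕ) :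
    cp p A = cp p B := by
  obtain ⟨S⟩ := exists_compSeries A
  rw [cp_eq_count p S, cp_eq_count p (mapSeriesEquiv e S), mapSeriesEquiv_count]
end P5

open Subgroup QuotientGroup Pointwise

theorem cp_aux (p : ℕ) : ∀ (r : ℕ) (H : Fin r → Type) [∀ i, Group (H i)] [∀ i, Finite (H i)]
    (G : Subgroup (∀ i, H i)), (∀ i : Fin r, ∀ x : H i, ∃ g ∈ G, g i = x) →
    cp p ↥G ≤ ∑ i : Fin r, cp p (H i) := by
  intro r
  induction r with
  | zero =>
    intro H _ _ G _
    haveI : Subsingleton (∀ i, H i) := ⟨fun a b => funext (fun i => i.elim0)⟩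
    haveI : Subsingleton ↥G := ⟨fun a b => Subtype.ext (Subsingleton.elim _ _)⟩
    rw [cp_of_subsingleton p ↥G]
    exact Nat.zero_le _
  | succ r ih =>
    intro H _ _ G hsurj
    haveI : Finite ↥G := Subtype.finite
    let ρ : ↥G →* H 0 := (Pi.evalMonoidHom H 0).comp G.subtype
    let ρ' : ↥G →* (∀ i : Fin r, H i.succ) :=
      { toFun := fun g i => (g : ∀ j, H j) i.succ
        map_one' := rfl
        map_mul' := fun _ _ => rfl }
    let N := ρ'.ker
    haveI hNn : N.Normal := MonoidHom.normal_ker ρ'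
    let e1 : (↥G ⧸ N) ≃* ↥ρ'.range := QuotientGroup.quotientKerEquivRange ρ'
    have hsurjR : ∀ (i : Fin r) (x : H i.succ), ∃ g ∈ ρ'.range, g i = x := by
      intro i x
      obtain ⟨g, hg, hgx⟩ := hsurj i.succ x
      exact ⟨ρ' ⟨g, hg⟩, ⟨⟨g, hg⟩, rfl⟩, hgx⟩
    have hIH := ih (fun i => H i.succ) ρ'.range hsurjR
    let ψ : ↥N →* H 0 := ρ.comp N.subtype
    have hψ : Function.Injective ψ := by
      intro a b hab
      apply Subtype.ext; apply Subtype.ext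
      funext j
      refine Fin.cases ?_ ?_ j
      · exact hab
      · intro i
        have ha : ρ' ↑a = 1 := MonoidHom.mem_ker.1 a.2
        have hb : ρ' ↑b = 1 := MonoidHom.mem_ker.1 b.2
        have h1 : ((a : ↥G) : ∀ j, H j) i.succ = 1 := by
          have := congrFun ha i
          exact this
        have h2 : ((b : ↥G) : ∀ j, H j) i.succ = 1 := by
          have := congrFun hb i
          exact this
        rw [h1, h2]
    let M := ψ.range
    let e2 : ↥N ≃* ↥M := MonoidHom.ofInjective hψ
    haveI hM : M.Normal := by
      constructor
      rintro x ⟨m, rfl⟩ h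
      obtain ⟨g, hg, hg0⟩ := hsurj 0 h
      set u : ↥G := ⟨g, hg⟩ with hu
      have hc : u * ↑m * u⁻¹ ∈ N := by
        show ρ' (u * ↑m * u⁻¹) = 1
        rw [map_mul, map_mul, map_inv]
        have hm1 : ρ' ↑m = 1 := m.2
        rw [hm1]
        group
      refine ⟨⟨u * ↑m * u⁻¹, hc⟩, ?_⟩
      show ((u * ↑m * u⁻¹ : ↥G) : ∀ j, H j) 0 = h * ψ m * h⁻¹
      have : ((u * ↑m * u⁻¹ : ↥G) : ∀ j, H j) 0 =
          g 0 * (((m : ↥G) : ∀ j, H j) 0) * (g 0)⁻¹ := rfl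
      rw [this, hg0]
      rfl
    calc cp p ↥G = cp p ↥N + cp p (↥G ⧸ N) := cp_eq_add p N
      _ = cp p ↥M + cp p ↥ρ'.range := by
          rw [cp_congr e2, cp_congr e1]
      _ ≤ cp p (H 0) + ∑ i : Fin r, cp p (H i.succ) := by
          refine add_le_add ?_ hIH
          have := cp_eq_add (G := H 0) p M
          omega
      _ = ∑ i : Fin (r + 1), cp p (H i) := (Fin.sum_univ_succ (fun i => cp p (H i))).symm


/-- If `G` is a subgroup of a direct product `H_1 × ⋯ × H_r` of finite groups projecting
onto each factor, then `c_p(G) ≤ c_p(H_1) + ⋯ + c_p(H_r)`. -/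
theorem cp_le_sum_of_subgroup_pi (p : ℕ) (hp : p.Prime)
    (r : ℕ) (H : Fin r → Type) [∀ i, Group (H i)] [∀ i, Finite (H i)]
    (G : Subgroup (∀ i, H i))
    (hsurj : ∀ i : Fin r, ∀ x : H i, ∃ g ∈ G, g i = x) :
    cp p ↥G ≤ ∑ i : Fin r, cp p (H i) := by
  exact cp_aux p r H G hsurj
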